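/- For every positive integer m and a = 6m − 1, the identity Σ_{s=1}^{a−1} s·⌈(a−s)/m⌉ = Σ_{k=1}^{6} C(km − 1, 2) holds. -/
import Mathlib

lemma aux_sum_range_mul (g : ℕ → ℕ) (k m : ℕ) :
    ∑ j ∈ Finset.range (k * m), g j
      = ∑ q ∈ Finset.range k, ∑ r ∈ Finset.range m, g (q * m + r) := by
  induction k with
  | zero => simp
  | succ k ih =>
    have h : (k + 1) * m = k * m + m := by ring
    rw [Finset.sum_range_succ, ← ih, h, Finset.range_eq_Ico,
      ← Finset.sum_Ico_consecutive g (Nat.zero_le (k * m)) (Nat.le_add_right (k * m) m),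
      ← Finset.range_eq_Ico]
    rw [Finset.sum_Ico_eq_sum_range]
    simp

lemma aux_sum_sub (C m : ℕ) (h : m ≤ C + 1) :
    ∑ r ∈ Finset.range m, (C - r) = m * (C + 1 - m) + ∑ r ∈ Finset.range m, r := by
  rw [← Finset.sum_range_reflect (fun r => C - r) m]
  have h2 : ∀ j ∈ Finset.range m, C - (m - 1 - j) = (C + 1 - m) + j := by
    intro j hj; simp only [Finset.mem_range] at hj; omega
  rw [Finset.sum_congr rfl h2, Finset.sum_add_distrib, Finset.sum_const,
    Finset.card_range, smul_eq_mul]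

lemma aux_sum_sub' (m : ℕ) :
    ∑ r ∈ Finset.range m, (m - 2 - r) = ∑ r ∈ Finset.range (m - 1), r := by
  cases m with
  | zero => simp
  | succ n =>
    rw [← Finset.sum_range_reflect (fun r => n + 1 - 2 - r) (n + 1)]
    have h : ∀ j ∈ Finset.range (n + 1), (n + 1 - 2 - (n + 1 - 1 - j)) = j - 1 := by
      intro j hj; simp only [Finset.mem_range] at hj; omega
    rw [Finset.sum_congr rfl h, Finset.sum_range_succ']
    simp

lemma two_mul_choose_two (n : ℕ) : 2 * n.choose 2 = n * (n - 1) := by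
  have h2 : 2 ∣ n * (n - 1) := by
    rcases Nat.even_or_odd n with h | h
    · exact Dvd.dvd.mul_right h.two_dvd _
    · exact Dvd.dvd.mul_left (by have := Nat.odd_iff.mp h; omega) _
  rw [Nat.choose_two_right, Nat.mul_div_cancel' h2]

theorem stmt14 (m : ℕ) (hm : 0 < m) :
    (∑ s ∈ Finset.Icc 1 (6 * m - 1 - 1), s * ((6 * m - 1 - s + (m - 1)) / m)) =
      ∑ k ∈ Finset.Icc 1 6, (k * m - 1).choose 2 := by
  rcases Nat.lt_or_ge m 2 with h2 | h2
  · interval_cases m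
    decide
  -- Step A: split off the +1 from the ceiling
  have stepA : ∀ s ∈ Finset.Icc 1 (6 * m - 1 - 1),
      s * ((6 * m - 1 - s + (m - 1)) / m) = s * ((6 * m - 2 - s) / m) + s := by
    intro s hs
    simp only [Finset.mem_Icc] at hs
    have he : 6 * m - 1 - s + (m - 1) = (6 * m - 2 - s) + m := by omega
    rw [he, Nat.add_div_right _ hm, Nat.mul_add, Nat.mul_one]
  rw [Finset.sum_congr rfl stepA, Finset.sum_add_distrib]
  -- Step B: reflect the first sum into ∑ j ∈ range (6m), (6m-2-j)*(j/m)
  have hB : ∑ s ∈ Finset.Icc 1 (6 * m - 1 - 1), s * ((6 * m - 2 - s) / m)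
      = ∑ j ∈ Finset.range (6 * m), (6 * m - 2 - j) * (j / m) := by
    have e1 : Finset.Icc 1 (6 * m - 1 - 1) = Finset.Ico 1 (6 * m - 1) := by
      rw [← Finset.Ico_add_one_right_eq_Icc]
      congr 1
      omega
    rw [e1, Finset.sum_Ico_eq_sum_range, ← Finset.sum_range_reflect]
    have e2 : ∀ j ∈ Finset.range (6 * m - 1 - 1),
        (1 + (6 * m - 1 - 1 - 1 - j)) * ((6 * m - 2 - (1 + (6 * m - 1 - 1 - 1 - j))) / m)
          = (6 * m - 2 - j) * (j / m) := by
      intro j hj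
      simp only [Finset.mem_range] at hj
      have ha : 1 + (6 * m - 1 - 1 - 1 - j) = 6 * m - 2 - j := by omega
      have hb : 6 * m - 2 - (6 * m - 2 - j) = j := by omega
      rw [ha, hb]
    rw [Finset.sum_congr rfl e2]
    have e3 : Finset.range (6 * m) = Finset.range (6 * m - 1 - 1 + 1 + 1) := by
      congr 1
      omega
    rw [e3, Finset.sum_range_succ, Finset.sum_range_succ,
      show 6 * m - 2 - (6 * m - 1 - 1) = 0 by omega,
      show 6 * m - 2 - (6 * m - 1 - 1 + 1) = 0 by omega]
    simp
  rw [hB, aux_sum_range_mul (fun j => (6 * m - 2 - j) * (j / m)) 6 m]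
  -- divisor fact inside each block
  have hdiv : ∀ q : ℕ, ∀ r ∈ Finset.range m, (q * m + r) / m = q := by
    intro q r hr
    simp only [Finset.mem_range] at hr
    rw [mul_comm, Nat.mul_add_div hm, Nat.div_eq_of_lt hr, add_zero]
  have hb : ∀ q c : ℕ, (∀ r : ℕ, 6 * m - 2 - (q * m + r) = c * m - 2 - r) →
      ∑ r ∈ Finset.range m, (6 * m - 2 - (q * m + r)) * ((q * m + r) / m)
        = (∑ r ∈ Finset.range m, (c * m - 2 - r)) * q := by
    intro q c hqc
    rw [Finset.sum_mul]
    refine Finset.sum_congr rfl fun r hr => ?_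
    rw [hdiv q r hr, hqc r]
  rw [show Finset.range 6 = {0, 1, 2, 3, 4, 5} from rfl,
    Finset.sum_insert (by decide), Finset.sum_insert (by decide),
    Finset.sum_insert (by decide), Finset.sum_insert (by decide),
    Finset.sum_insert (by decide), Finset.sum_singleton]
  rw [hb 0 6 (fun r => by omega), hb 1 5 (fun r => by omega), hb 2 4 (fun r => by omega),
    hb 3 3 (fun r => by omega), hb 4 2 (fun r => by omega), hb 5 1 (fun r => by omega)]
  rw [aux_sum_sub (5 * m - 2) m (by omega), aux_sum_sub (4 * m - 2) m (by omega),
    aux_sum_sub (3 * m - 2) m (by omega), aux_sum_sub (2 * m - 2) m (by omega)]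
  simp only [one_mul]
  rw [aux_sum_sub' m]
  have hU : ∑ x ∈ Finset.Icc 1 (6 * m - 1 - 1), x
      = (6 * m - 2) + ∑ i ∈ Finset.range (6 * m - 2), i := by
    have e1 : Finset.Icc 1 (6 * m - 1 - 1) = Finset.Ico 1 (6 * m - 1) := by
      rw [← Finset.Ico_add_one_right_eq_Icc]; congr 1; omega
    rw [e1, Finset.sum_Ico_eq_sum_range, show 6 * m - 1 - 1 = 6 * m - 2 from by omega,
      Finset.sum_add_distrib, Finset.sum_const, Finset.card_range, smul_eq_mul, mul_one]
  rw [hU]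
  rw [show Finset.Icc 1 6 = ({1, 2, 3, 4, 5, 6} : Finset ℕ) from rfl,
    Finset.sum_insert (by decide), Finset.sum_insert (by decide),
    Finset.sum_insert (by decide), Finset.sum_insert (by decide),
    Finset.sum_insert (by decide), Finset.sum_singleton]
  have hT := Finset.sum_range_id_mul_two m
  have hT' := Finset.sum_range_id_mul_two (m - 1)
  have hT6 := Finset.sum_range_id_mul_two (6 * m - 2)
  have hC1 := two_mul_choose_two (1 * m - 1)
  have hC2 := two_mul_choose_two (2 * m - 1)
  have hC3 := two_mul_choose_two (3 * m - 1)
  have hC4 := two_mul_choose_two (4 * m - 1)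
  have hC5 := two_mul_choose_two (5 * m - 1)
  have hC6 := two_mul_choose_two (6 * m - 1)
  simp only [mul_zero, mul_one, zero_add]
  qify [show 2 ≤ 5*m from by omega, show 2 ≤ 4*m from by omega,
    show 2 ≤ 3*m from by omega, show 2 ≤ 2*m from by omega,
    show m ≤ 5*m-2+1 from by omega, show m ≤ 4*m-2+1 from by omega,
    show m ≤ 3*m-2+1 from by omega, show m ≤ 2*m-2+1 from by omega,
    show 1 ≤ m from hm, show 2 ≤ 6*m from by omega,
    show 1 ≤ m-1 from by omega, show 1 ≤ 6*m-2 from by omega,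
    show 1 ≤ 1*m from by omega, show 1 ≤ 2*m from by omega,
    show 1 ≤ 3*m from by omega, show 1 ≤ 4*m from by omega,
    show 1 ≤ 5*m from by omega, show 1 ≤ 6*m from by omega,
    show 1 ≤ 1*m-1 from by omega, show 1 ≤ 2*m-1 from by omega,
    show 1 ≤ 3*m-1 from by omega, show 1 ≤ 4*m-1 from by omega,
    show 1 ≤ 5*m-1 from by omega, show 1 ≤ 6*m-1 from by omega]
    at hT hT' hT6 hC1 hC2 hC3 hC4 hC5 hC6 ⊢
  linear_combination 5*hT + (5/2 : ℚ)*hT' + (1/2 : ℚ)*hT6 - (1/2 : ℚ)*hC1 - (1/2 : ℚ)*hC2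
    - (1/2 : ℚ)*hC3 - (1/2 : ℚ)*hC4 - (1/2 : ℚ)*hC5 - (1/2 : ℚ)*hC6
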